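/- Let G be a finite 2-group admitting an Iwasawa structure (A, t) of level s, i.e., A is a normal abelian subgroup, G is generated by A and t, and t·a·t⁻¹ = a^(1+2^s) for every a ∈ A. Then the commutator subgroup [G,G] equals A^(2^s), the subgroup generated by 2^s-th powers of elements of A. -/

import Mathlib

/-- An Iwasawa structure of level `s` on a group `G`: a normal abelian subgroup `A`
together with an element `t` such that `G = ⟨A, t⟩` and `t a t⁻¹ = a ^ (1 + 2 ^ s)`
for every `a ∈ A`. -/
def IsIwasawaStructure {G : Type*} [Group G] (A : Subgroup G) (t : G) (s : ℕ) : Prop :=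
  A.Normal ∧ (∀ a ∈ A, ∀ b ∈ A, a * b = b * a) ∧
    Subgroup.closure ((A : Set G) ∪ {t}) = ⊤ ∧
    ∀ a ∈ A, t * a * t⁻¹ = a ^ (1 + 2 ^ s)

open scoped commutatorElement

/-- If a finite 2-group `G` admits an Iwasawa structure `(A, t)` of level `s ≥ 1`, then
the commutator subgroup `[G, G]` equals `A ^ (2 ^ s)`, the subgroup generated by the
`2 ^ s`-th powers of elements of `A`. -/
theorem commutator_eq_pow_of_isIwasawaStructure {G : Type*} [Group G] [Finite G]
    (hG : IsPGroup 2 G) (A : Subgroup G) (t : G) (s : ℕ) (hs : 1 ≤ s)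
    (h : IsIwasawaStructure A t s) :
    commutator G = Subgroup.closure ((· ^ (2 ^ s)) '' (A : Set G)) := by
  obtain ⟨hN, hcomm, hclos, hconj⟩ := h
  set T : Set G := (· ^ (2 ^ s)) '' (A : Set G) with hT
  set B := Subgroup.closure T with hB
  -- the key commutator identity
  have key : ∀ a ∈ A, ⁅t, a⁆ = a ^ (2 ^ s) := by
    intro a ha
    rw [commutatorElement_def, hconj a ha, add_comm, pow_succ, mul_inv_cancel_right]
  -- conjugation maps B into B provided it maps T into B
  have conj_le : ∀ g : G, (∀ x ∈ T, g * x * g⁻¹ ∈ B) → ∀ b ∈ B, g * b * g⁻¹ ∈ B := by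
    intro g hg b hb
    have : B.map (MulAut.conj g).toMonoidHom ≤ B := by
      rw [hB, MonoidHom.map_closure]
      refine (Subgroup.closure_le _).2 ?_
      rintro _ ⟨x, hx, rfl⟩
      simpa using hg x hx
    exact this ⟨b, hb, by simp⟩
  -- B is normal
  have hnorm : ∀ g ∈ (A : Set G) ∪ {t}, g ∈ Subgroup.normalizer (B : Set G) := by
    intro g hg
    have h1 : ∀ x ∈ T, g * x * g⁻¹ ∈ B := by
      rintro _ ⟨a, ha, rfl⟩
      show g * a ^ (2 ^ s) * g⁻¹ ∈ B
      rcases hg with hgA | hgt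
      · have hc : Commute g (a ^ (2 ^ s)) :=
          (show Commute g a from hcomm g hgA a ha).pow_right _
        rw [hc.eq, mul_inv_cancel_right]
        exact Subgroup.subset_closure ⟨a, ha, rfl⟩
      · rw [show g = t from hgt, ← conj_pow, hconj a ha]
        exact Subgroup.subset_closure ⟨a ^ (1 + 2 ^ s), A.pow_mem ha _, rfl⟩
    have h2 : ∀ x ∈ T, g⁻¹ * x * g ∈ B := by
      rintro _ ⟨a, ha, rfl⟩
      show g⁻¹ * a ^ (2 ^ s) * g ∈ B
      rcases hg with hgA | hgt
      · have hc : Commute g⁻¹ (a ^ (2 ^ s)) :=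
          ((show Commute g a from hcomm g hgA a ha).pow_right _).inv_left
        rw [hc.eq, inv_mul_cancel_right]
        exact Subgroup.subset_closure ⟨a, ha, rfl⟩
      · rw [show g = t from hgt]
        have ha' : t⁻¹ * a * t ∈ A := by simpa using hN.conj_mem a ha t⁻¹
        have heq : t⁻¹ * a ^ (2 ^ s) * t = (t⁻¹ * a * t) ^ (2 ^ s) := by
          have := conj_pow (i := 2 ^ s) (a := t⁻¹) (b := a)
          simpa using this.symm
        rw [heq]
        exact Subgroup.subset_closure ⟨_, ha', rfl⟩
    rw [Subgroup.mem_normalizer_iff]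
    intro n
    constructor
    · intro hn; exact conj_le g h1 n hn
    · intro hn
      have := conj_le g⁻¹ (by simpa using h2) _ hn
      simpa [mul_assoc] using this
  have hBnormal : B.Normal := by
    rw [← Subgroup.normalizer_eq_top_iff, eq_top_iff, ← hclos]
    exact (Subgroup.closure_le _).2 hnorm
  letI := hBnormal
  -- commutators of generators lie in B
  have base : ∀ x ∈ (A : Set G) ∪ {t}, ∀ y ∈ (A : Set G) ∪ {t}, ⁅x, y⁆ ∈ B := by
    have hAt : ∀ a ∈ A, ⁅t, a⁆ ∈ B := fun a ha => by
      rw [key a ha]; exact Subgroup.subset_closure ⟨a, ha, rfl⟩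
    rintro x (hx | rfl) y (hy | rfl)
    · rw [commutatorElement_eq_one_iff_commute.2 (show Commute x y from hcomm x hx y hy)]
      exact B.one_mem
    · have := hAt x hx
      rw [← commutatorElement_inv] at this
      simpa using B.inv_mem this
    · exact hAt y hy
    · rw [commutatorElement_self]; exact B.one_mem
  -- pass to the quotient: all generators commute there, hence all elements do
  have mem_iff : ∀ g k : G, ⁅g, k⁆ ∈ B ↔
      Commute (QuotientGroup.mk g : G ⧸ B) (QuotientGroup.mk k) := by
    intro g k
    rw [← commutatorElement_eq_one_iff_commute]
    show _ ↔ (QuotientGroup.mk ⁅g, k⁆ : G ⧸ B) = 1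
    rw [QuotientGroup.eq_one_iff]
  have step1 : ∀ x ∈ (A : Set G) ∪ {t}, ∀ k : G, ⁅x, k⁆ ∈ B := by
    intro x hx k
    rw [mem_iff]
    have hk : k ∈ Subgroup.comap (QuotientGroup.mk' B)
        (Subgroup.centralizer {(QuotientGroup.mk x : G ⧸ B)}) := by
      refine (Subgroup.closure_le _).2 ?_ (hclos ▸ Subgroup.mem_top k)
      intro y hy
      simp only [SetLike.mem_coe, Subgroup.mem_comap, Subgroup.mem_centralizer_singleton_iff,
        QuotientGroup.mk'_apply]
      exact (((mem_iff x y).1 (base x hx y hy)).symm : Commute _ _)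
    simp only [SetLike.mem_coe, Subgroup.mem_comap, Subgroup.mem_centralizer_singleton_iff,
      QuotientGroup.mk'_apply] at hk
    exact (show Commute (QuotientGroup.mk k : G ⧸ B) (QuotientGroup.mk x) from hk).symm
  have comm_in_B : ∀ g k : G, ⁅g, k⁆ ∈ B := by
    intro g k
    rw [mem_iff]
    have hg : g ∈ Subgroup.comap (QuotientGroup.mk' B)
        (Subgroup.centralizer {(QuotientGroup.mk k : G ⧸ B)}) := by
      refine (Subgroup.closure_le _).2 ?_ (hclos ▸ Subgroup.mem_top g)
      intro y hy
      simp only [SetLike.mem_coe, Subgroup.mem_comap, Subgroup.mem_centralizer_singleton_iff,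
        QuotientGroup.mk'_apply]
      exact ((mem_iff y k).1 (step1 y hy k) : Commute _ _)
    simp only [SetLike.mem_coe, Subgroup.mem_comap, Subgroup.mem_centralizer_singleton_iff,
      QuotientGroup.mk'_apply] at hg
    exact hg
  -- conclude
  apply le_antisymm
  · rw [commutator_def]
    exact Subgroup.commutator_le.mpr fun g _ k _ => comm_in_B g k
  · refine (Subgroup.closure_le _).2 ?_
    rintro _ ⟨a, ha, rfl⟩
    show a ^ (2 ^ s) ∈ commutator G
    rw [← key a ha]
    exact Subgroup.commutator_mem_commutator (Subgroup.mem_top t) (Subgroup.mem_top a)
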